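/- Let R be a TRS, μ a replacement map, s and t terms, σ a substitution. If sσ is a μ-replacing term and μ-cap_{μ,s}(t) = t (the μ-cap function leaves t unchanged), then tσ is an R-normal form. -/

import Mathlib

/-- First-order terms over a signature `F` with ℕ-indexed variables. -/
inductive Term (F : Type) : Type
  | var : ℕ → Term F
  | fn : F → List (Term F) → Term F

/-- `μ`-replacing positions of a term, for a replacement map `μ`. -/
inductive PosMu {F : Type} (μ : F → Set ℕ) : Term F → List ℕ → Prop
  | nil (t : Term F) : PosMu μ t []
  | cons (f : F) (ts : List (Term F)) (i : ℕ) (u : Term F) (p : List ℕ) :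
      i ∈ μ f → ts[i]? = some u → PosMu μ u p → PosMu μ (Term.fn f ts) (i :: p)

/-- `SubtermAt t p u`: the subterm of `t` at position `p` is `u`. -/
inductive SubtermAt {F : Type} : Term F → List ℕ → Term F → Prop
  | refl (t : Term F) : SubtermAt t [] t
  | step (f : F) (ts : List (Term F)) (i : ℕ) (u : Term F) (p : List ℕ) (v : Term F) :
      ts[i]? = some u → SubtermAt u p v → SubtermAt (Term.fn f ts) (i :: p) v

/-- Application of a substitution to a term. -/
def subst {F : Type} (σ : ℕ → Term F) : Term F → Term F
  | .var v => σ v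
  | .fn f ts => .fn f (ts.attach.map fun u => subst σ u.1)
  decreasing_by
    have := List.sizeOf_lt_of_mem u.2
    simp only [Term.fn.sizeOf_spec] at *
    omega

/-- `RewriteAt R s p t`: a rewrite step from `s` to `t` using a rule of `R` at
position `p`. -/
inductive RewriteAt {F : Type} (R : Term F → Term F → Prop) :
    Term F → List ℕ → Term F → Prop
  | root (l r : Term F) (σ : ℕ → Term F) :
      R l r → RewriteAt R (subst σ l) [] (subst σ r)
  | congr (f : F) (ts : List (Term F)) (i : ℕ) (u v : Term F) (p : List ℕ) :
      ts[i]? = some u → RewriteAt R u p v →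
      RewriteAt R (Term.fn f ts) (i :: p) (Term.fn f (ts.set i v))

/-- `t` is an `R`-normal form: no redex. -/
def NF {F : Type} (R : Term F → Term F → Prop) (t : Term F) : Prop :=
  ¬ ∃ p u, RewriteAt R t p u

/-- `t` is a `μ`-replacing term: every reducible subterm of `t` occurs at a
`μ`-replacing position. -/
def MuTerm {F : Type} (μ : F → Set ℕ) (R : Term F → Term F → Prop) (t : Term F) : Prop :=
  ∀ p u, SubtermAt t p u → ¬ NF R u → PosMu μ t p

/-- Two terms are unifiable (with variables renamed apart, hence two
substitutions). -/
def Unifiable {F : Type} (u l : Term F) : Prop :=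
  ∃ σ τ : ℕ → Term F, subst σ u = subst τ l

/-- `CapFixed R μ s t` holds exactly when the μ-cap function `Cap_{μ,s}` leaves
`t` unchanged: either `t` occurs at a non-μ-replacing position of `s`, or
`t = f(t₁,…,tₙ)` where each `tᵢ` is left unchanged and `f(t₁,…,tₙ)` unifies with
no left-hand side of `R` (otherwise the result is a fresh variable, hence ≠ t). -/
inductive CapFixed {F : Type} (R : Term F → Term F → Prop) (μ : F → Set ℕ)
    (s : Term F) : Term F → Prop
  | nonrep (t : Term F) (p : List ℕ) :
      SubtermAt s p t → ¬ PosMu μ s p → CapFixed R μ s t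
  | fn (f : F) (ts : List (Term F)) :
      (∀ u ∈ ts, CapFixed R μ s u) →
      (∀ l r, R l r → ¬ Unifiable (Term.fn f ts) l) →
      CapFixed R μ s (Term.fn f ts)

/-- if `sσ` is a μ-replacing term and `Cap_{μ,s}(t) = t`, then
`tσ` is an `R`-normal form. -/
theorem subst_fn {F : Type} (σ : ℕ → Term F) (f : F) (ts : List (Term F)) :
    subst σ (Term.fn f ts) = Term.fn f (ts.map (subst σ)) := by
  rw [subst]
  congr 1
  simp [List.attach, List.attachWith, List.map_pmap]

theorem subtermAt_subst {F : Type} (σ : ℕ → Term F) {s : Term F} {p : List ℕ} {t : Term F}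
    (h : SubtermAt s p t) : SubtermAt (subst σ s) p (subst σ t) := by
  induction h with
  | refl => exact SubtermAt.refl _
  | step f ts i u p v hget _ ih =>
    rw [subst_fn]
    exact SubtermAt.step f _ i (subst σ u) p (subst σ v)
      (by rw [List.getElem?_map, hget]; rfl) ih

theorem posMu_subst_back {F : Type} (μ : F → Set ℕ) (σ : ℕ → Term F)
    {s : Term F} {p : List ℕ} {t : Term F} (h : SubtermAt s p t)
    (hp : PosMu μ (subst σ s) p) : PosMu μ s p := by
  induction h with
  | refl => exact PosMu.nil _
  | step f ts i u p v hget _ ih =>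
    rw [subst_fn] at hp
    cases hp with
    | cons _ _ _ w _ hi hget' hw =>
      rw [List.getElem?_map, hget] at hget'
      cases hget'
      exact PosMu.cons f ts i u p hi hget (ih hw)

theorem stmt10 {F : Type} (R : Term F → Term F → Prop) (μ : F → Set ℕ)
    (s t : Term F) (σ : ℕ → Term F)
    (hs : MuTerm μ R (subst σ s)) (hcap : CapFixed R μ s t) :
    NF R (subst σ t) := by
  induction hcap with
  | nonrep t p hsub hnp =>
    intro hred
    exact hnp (posMu_subst_back μ σ hsub
      (hs p (subst σ t) (subtermAt_subst σ hsub) (not_not_intro hred)))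
  | fn f ts hts hnu ih =>
    rintro ⟨p, v, hr⟩
    rw [subst_fn] at hr
    generalize hW : Term.fn f (List.map (subst σ) ts) = W at hr
    cases hr with
    | root l r τ hlr =>
      exact hnu l r hlr ⟨σ, τ, by rw [subst_fn, hW]⟩
    | congr f' ts' i u v p hget hstep =>
      obtain ⟨rfl, rfl⟩ : f' = f ∧ ts' = List.map (subst σ) ts := by
        cases hW; exact ⟨rfl, rfl⟩
      rw [List.getElem?_map] at hget
      cases hu : ts[i]? with
      | none => rw [hu] at hget; exact absurd hget (by simp)
      | some w =>
        rw [hu] at hget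
        cases hget
        exact ih w (List.mem_of_getElem? hu) ⟨p, v, hstep⟩
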